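/- Let p > 1 and let F : 𝔻 → ℂ be a smooth (C¹) function with β₂(F) := sup_{z∈𝔻} (1−|z|²)√(|J_F(z)|) < ∞ (i.e. F ∈ 𝔅𝒯). Then for every a ∈ 𝔻, ∫_𝔻 |J_F(z)| (1−|φ_a(z)|²)^p dA(z) ≤ β₂(F)² ∫_𝔻 (1−|ζ|²)^{p−2} dA(ζ) < ∞; in particular 𝔅𝒯 ⊆ 𝒬𝒯_p for all p > 1. -/

import Mathlib

open MeasureTheory Metric Complex Set Filter Topology

noncomputable section

/-- The open unit disk in the complex plane. -/
def unitDisk : Set ℂ := Metric.ball 0 1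

/-- The disk automorphism `φ_a(z) = (a - z)/(1 - conj a · z)`. -/
def moebius (a z : ℂ) : ℂ := (a - z) / (1 - (starRingEnd ℂ) a * z)

/-- The pre-Schwarzian derivative `h''/h'` of an analytic function. -/
def preSchwarz (h : ℂ → ℂ) (z : ℂ) : ℂ := deriv (deriv h) z / deriv h z

/-- The Schwarzian derivative `(h''/h')' - (1/2)(h''/h')²` of an analytic function. -/
def schwarz (h : ℂ → ℂ) (z : ℂ) : ℂ :=
  deriv (preSchwarz h) z - (1 / 2) * preSchwarz h z ^ 2

/-- The (second complex) dilatation `w = g'/h'` of the harmonic map `f = h + conj g`. -/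
def dil (h g : ℂ → ℂ) (z : ℂ) : ℂ := deriv g z / deriv h z

/-- `F_z = h''/h' - w'·conj(w)/(1-|w|²)` for `F = log J_f`, `f = h + conj g`. -/
def FzLogJac (h g : ℂ → ℂ) (z : ℂ) : ℂ :=
  preSchwarz h z -
    deriv (dil h g) z * (starRingEnd ℂ) (dil h g z) / ((1 - ‖dil h g z‖ ^ 2 : ℝ) : ℂ)

/-- The harmonic Schwarzian derivative
`S_f = S_h + (conj w/(1-|w|²))(w'·h''/h' - w'') - (3/2)(w'·conj w/(1-|w|²))²`. -/
def harmSchwarz (h g : ℂ → ℂ) (z : ℂ) : ℂ :=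
  schwarz h z
    + ((starRingEnd ℂ) (dil h g z) / ((1 - ‖dil h g z‖ ^ 2 : ℝ) : ℂ))
        * (deriv (dil h g) z * preSchwarz h z - deriv (deriv (dil h g)) z)
    - (3 / 2) * (deriv (dil h g) z * (starRingEnd ℂ) (dil h g z)
        / ((1 - ‖dil h g z‖ ^ 2 : ℝ) : ℂ)) ^ 2

/-- `f = h + conj g` is a sense-preserving harmonic mapping on the unit disk:
`h, g` analytic on `𝔻` and `J_f = |h'|² - |g'|² > 0` on `𝔻`. -/
def SensePreserving (h g : ℂ → ℂ) : Prop :=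
  DifferentiableOn ℂ h unitDisk ∧ DifferentiableOn ℂ g unitDisk ∧
    ∀ z ∈ unitDisk, ‖deriv g z‖ < ‖deriv h z‖

/-- `f` is uniformly locally univalent on the unit disk: injective on every
pseudo-hyperbolic disk of some fixed radius `r < 1`. -/
def UnifLocUnivalent (f : ℂ → ℂ) : Prop :=
  ∃ r : ℝ, 0 < r ∧ r < 1 ∧ ∀ a ∈ unitDisk,
    Set.InjOn f {z | z ∈ unitDisk ∧ ‖(z - a) / (1 - (starRingEnd ℂ) a * z)‖ < r}

/-- The Wirtinger derivative `F_z = (1/2)(∂ₓF - i ∂_yF)` of a real-differentiable map. -/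
def wirtZ (F : ℂ → ℂ) (z : ℂ) : ℂ :=
  (1 / 2) * (fderiv ℝ F z 1 - Complex.I * fderiv ℝ F z Complex.I)

/-- The Wirtinger derivative `F_{z̄} = (1/2)(∂ₓF + i ∂_yF)` of a real-differentiable map. -/
def wirtZbar (F : ℂ → ℂ) (z : ℂ) : ℂ :=
  (1 / 2) * (fderiv ℝ F z 1 + Complex.I * fderiv ℝ F z Complex.I)

/-- The Jacobian `J_F = |F_z|² - |F_{z̄}|²` of a smooth map `F : 𝔻 → ℂ`. -/
def jac (F : ℂ → ℂ) (z : ℂ) : ℝ := ‖wirtZ F z‖ ^ 2 - ‖wirtZbar F z‖ ^ 2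

/-- `σ` is a holomorphic automorphism of the unit disk. -/
def DiskAut (σ : ℂ → ℂ) : Prop :=
  DifferentiableOn ℂ σ unitDisk ∧ Set.BijOn σ unitDisk unitDisk

/-- The function `h(z) = 2(1-z)^{-1/2}` (principal branch). -/
def hfun (w : ℂ) : ℂ := 2 * (1 - w) ^ (-(1 / 2) : ℂ)


open scoped Real ENNReal NNReal




lemma denom_ne_zero {a z : ℂ} (ha : ‖a‖ < 1) (hz : ‖z‖ < 1) :
    1 - (starRingEnd ℂ) a * z ≠ 0 := by
  intro h
  have h2 : (1 : ℂ) = (starRingEnd ℂ) a * z := by linear_combination h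
  have : ‖(starRingEnd ℂ) a * z‖ < 1 := by
    rw [norm_mul, RingHomIsometric.norm_map]
    nlinarith [norm_nonneg a, norm_nonneg z]
  rw [← h2] at this
  simp at this

lemma normSq_denom_sub (a z : ℂ) :
    Complex.normSq (1 - (starRingEnd ℂ) a * z) - Complex.normSq (a - z)
      = (1 - Complex.normSq a) * (1 - Complex.normSq z) := by
  simp only [Complex.normSq_apply, Complex.sub_re, Complex.sub_im, Complex.mul_re, Complex.mul_im,
    Complex.conj_re, Complex.conj_im, Complex.one_re, Complex.one_im]
  ring

lemma one_sub_normSq_moebius {a z : ℂ} (ha : ‖a‖ < 1) (hz : ‖z‖ < 1) :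
    1 - ‖moebius a z‖ ^ 2 = (1 - Complex.normSq a) * (1 - Complex.normSq z)
      / Complex.normSq (1 - (starRingEnd ℂ) a * z) := by
  have hd := denom_ne_zero ha hz
  have hd' : Complex.normSq (1 - (starRingEnd ℂ) a * z) ≠ 0 := by
    simpa [Complex.normSq_eq_zero] using hd
  rw [moebius, norm_div, div_pow, Complex.sq_norm,
    Complex.sq_norm, eq_div_iff hd', sub_mul, one_mul,
    div_mul_cancel₀ _ hd', ← normSq_denom_sub a z]

lemma moebius_mem_disk {a z : ℂ} (ha : ‖a‖ < 1) (hz : ‖z‖ < 1) : ‖moebius a z‖ < 1 := by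
  have h1 : 0 < 1 - Complex.normSq a := by
    rw [← Complex.sq_norm]; nlinarith [norm_nonneg a]
  have h2 : 0 < 1 - Complex.normSq z := by
    rw [← Complex.sq_norm]; nlinarith [norm_nonneg z]
  have hd' : 0 < Complex.normSq (1 - (starRingEnd ℂ) a * z) := by
    have := denom_ne_zero ha hz
    exact Complex.normSq_pos.2 this
  have key := one_sub_normSq_moebius ha hz
  have hpos : 0 < 1 - ‖moebius a z‖ ^ 2 := by
    rw [key]; positivity
  nlinarith [norm_nonneg (moebius a z)]

lemma moebius_invol {a z : ℂ} (ha : ‖a‖ < 1) (hz : ‖z‖ < 1) :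
    moebius a (moebius a z) = z := by
  have hd := denom_ne_zero ha hz
  have haa : 1 - (starRingEnd ℂ) a * a ≠ 0 := by
    intro h
    have h2 : (1 : ℂ) = (starRingEnd ℂ) a * a := by linear_combination h
    have : ‖(starRingEnd ℂ) a * a‖ < 1 := by
      rw [norm_mul, RingHomIsometric.norm_map]
      nlinarith [norm_nonneg a]
    rw [← h2] at this
    simp at this
  have e1 : a - moebius a z = z * (1 - (starRingEnd ℂ) a * a) / (1 - (starRingEnd ℂ) a * z) := by
    rw [moebius, eq_div_iff hd, sub_mul, div_mul_cancel₀ _ hd]; ring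
  have e2 : 1 - (starRingEnd ℂ) a * moebius a z
      = (1 - (starRingEnd ℂ) a * a) / (1 - (starRingEnd ℂ) a * z) := by
    rw [moebius]; field_simp; ring
  have e0 : moebius a (moebius a z)
      = (a - moebius a z) / (1 - (starRingEnd ℂ) a * moebius a z) := rfl
  rw [e0, e1, e2]
  rw [div_div_div_cancel_right₀]
  · exact mul_div_cancel_right₀ z haa
  · exact hd

lemma moebius_hasDerivAt {a z : ℂ} (ha : ‖a‖ < 1) (hz : ‖z‖ < 1) :
    HasDerivAt (moebius a)
      (((Complex.normSq a : ℂ) - 1) / (1 - (starRingEnd ℂ) a * z) ^ 2) z := by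
  have hd := denom_ne_zero ha hz
  have h1 : HasDerivAt (fun w : ℂ => a - w) (-1) z := by
    simpa using (hasDerivAt_id z).const_sub a
  have h2 : HasDerivAt (fun w : ℂ => 1 - (starRingEnd ℂ) a * w) (-((starRingEnd ℂ) a)) z := by
    simpa using ((hasDerivAt_id z).const_mul ((starRingEnd ℂ) a)).const_sub 1
  have := h1.div h2 hd
  refine this.congr_deriv (Eq.symm ?_)
  have hc : (starRingEnd ℂ) a * a = (Complex.normSq a : ℂ) := by
    rw [mul_comm, Complex.mul_conj]
  rw [div_left_inj' (pow_ne_zero 2 hd)]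
  linear_combination (-1 : ℂ) * hc

lemma part1 (p : ℝ) (J : ℂ → ℝ) (hJ : ∀ z, 0 ≤ J z) (B : ℝ)
    (hB : ∀ z ∈ unitDisk, (1 - ‖z‖ ^ 2) * Real.sqrt (J z) ≤ B)
    (a : ℂ) (ha : ‖a‖ < 1) :
    ∫⁻ z in unitDisk, ENNReal.ofReal (J z * (1 - ‖moebius a z‖ ^ 2) ^ p)
      ≤ ENNReal.ofReal (B ^ 2)
          * ∫⁻ ζ in unitDisk, ENNReal.ofReal ((1 - ‖ζ‖ ^ 2) ^ (p - 2)) := by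
  have hdetlem : ∀ c : ℂ,
      (((1 : ℂ →L[ℂ] ℂ).smulRight c).restrictScalars ℝ).det = Complex.normSq c := by
    intro c
    have h : ((((1 : ℂ →L[ℂ] ℂ).smulRight c).restrictScalars ℝ : ℂ →L[ℝ] ℂ) : ℂ →ₗ[ℝ] ℂ)
        = Algebra.lmul ℝ ℂ c := by
      apply LinearMap.ext
      intro z
      simp [mul_comm]
    rw [ContinuousLinearMap.det, h, ← Algebra.norm_apply, Algebra.norm_complex_apply]
  set d : ℂ → ℂ := fun z => ((Complex.normSq a : ℂ) - 1) / (1 - (starRingEnd ℂ) a * z) ^ 2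
    with hd
  set f' : ℂ → ℂ →L[ℝ] ℂ := fun z => ((1 : ℂ →L[ℂ] ℂ).smulRight (d z)).restrictScalars ℝ
    with hf'
  have hmeasD : MeasurableSet unitDisk := measurableSet_ball
  have hderiv : ∀ z ∈ unitDisk, HasFDerivWithinAt (moebius a) (f' z) unitDisk z := by
    intro z hz
    have h := (moebius_hasDerivAt ha (mem_ball_zero_iff.1 hz)).hasFDerivAt
    exact (h.restrictScalars ℝ).hasFDerivWithinAt
  have hinj : Set.InjOn (moebius a) unitDisk := by
    intro x hx y hy hxy
    rw [← moebius_invol ha (mem_ball_zero_iff.1 hx), hxy,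
      moebius_invol ha (mem_ball_zero_iff.1 hy)]
  have hmaps : ∀ z ∈ unitDisk, moebius a z ∈ unitDisk := fun z hz =>
    mem_ball_zero_iff.2 (moebius_mem_disk ha (mem_ball_zero_iff.1 hz))
  have himg : moebius a '' unitDisk = unitDisk := by
    apply Subset.antisymm
    · rintro _ ⟨z, hz, rfl⟩; exact hmaps z hz
    · intro w hw
      exact ⟨moebius a w, hmaps w hw, moebius_invol ha (mem_ball_zero_iff.1 hw)⟩
  have hcov := lintegral_image_eq_lintegral_abs_det_fderiv_mul volume hmeasD hderiv hinj
    (fun ζ => ENNReal.ofReal ((1 - ‖ζ‖ ^ 2) ^ (p - 2)))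
  rw [himg] at hcov
  have hApos : 0 < 1 - Complex.normSq a := by
    rw [← Complex.sq_norm]
    nlinarith [norm_nonneg a]
  have key : ∀ z ∈ unitDisk,
      ENNReal.ofReal (J z * (1 - ‖moebius a z‖ ^ 2) ^ p)
        ≤ ENNReal.ofReal (B ^ 2) * (ENNReal.ofReal |(f' z).det|
            * ENNReal.ofReal ((1 - ‖moebius a z‖ ^ 2) ^ (p - 2))) := by
    intro z hz
    have hz' : ‖z‖ < 1 := mem_ball_zero_iff.1 hz
    have hNpos : 0 < Complex.normSq (1 - (starRingEnd ℂ) a * z) :=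
      Complex.normSq_pos.2 (denom_ne_zero ha hz')
    have hs : 0 < 1 - ‖z‖ ^ 2 := by nlinarith [norm_nonneg z]
    have hnz : Complex.normSq z = ‖z‖ ^ 2 := by
      rw [Complex.sq_norm]
    have ht : 1 - ‖moebius a z‖ ^ 2
        = (1 - ‖z‖ ^ 2) * ((1 - Complex.normSq a)
            / Complex.normSq (1 - (starRingEnd ℂ) a * z)) := by
      rw [one_sub_normSq_moebius ha hz', hnz]
      ring
    have hdetval : (f' z).det = ((1 - Complex.normSq a)
        / Complex.normSq (1 - (starRingEnd ℂ) a * z)) ^ 2 := by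
      rw [hf']
      simp only
      rw [hdetlem, hd]
      simp only
      rw [map_div₀, map_pow]
      have hcast : ((Complex.normSq a : ℝ) : ℂ) - 1 = ((Complex.normSq a - 1 : ℝ) : ℂ) := by
        push_cast; ring
      rw [hcast, Complex.normSq_ofReal]
      field_simp
      ring
    set D : ℝ := (1 - Complex.normSq a) / Complex.normSq (1 - (starRingEnd ℂ) a * z) with hD
    have hDpos : 0 < D := div_pos hApos hNpos
    have htpos : 0 < 1 - ‖moebius a z‖ ^ 2 := by rw [ht]; positivity
    rw [hdetval, _root_.abs_of_nonneg (sq_nonneg _)]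
    rw [← ENNReal.ofReal_mul (by positivity : (0:ℝ) ≤ D ^ 2),
      ← ENNReal.ofReal_mul (by positivity : (0:ℝ) ≤ B ^ 2)]
    apply ENNReal.ofReal_le_ofReal
    have hrpow : (1 - ‖moebius a z‖ ^ 2) ^ p
        = (1 - ‖moebius a z‖ ^ 2) ^ (p - 2) * (1 - ‖moebius a z‖ ^ 2) ^ (2:ℕ) := by
      rw [← Real.rpow_natCast (1 - ‖moebius a z‖ ^ 2) 2, ← Real.rpow_add htpos]
      norm_num
    have hsq : J z * (1 - ‖z‖ ^ 2) ^ 2 ≤ B ^ 2 := by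
      have h1 := hB z hz
      have h2 : ((1 - ‖z‖ ^ 2) * Real.sqrt (J z)) ^ 2 ≤ B ^ 2 :=
        pow_le_pow_left₀ (by positivity) h1 2
      calc J z * (1 - ‖z‖ ^ 2) ^ 2 = ((1 - ‖z‖ ^ 2) * Real.sqrt (J z)) ^ 2 := by
            rw [mul_pow, Real.sq_sqrt (hJ z)]; ring
        _ ≤ B ^ 2 := h2
    calc J z * (1 - ‖moebius a z‖ ^ 2) ^ p
        = J z * ((1 - ‖moebius a z‖ ^ 2) ^ (p - 2) * (1 - ‖moebius a z‖ ^ 2) ^ (2:ℕ)) := by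
          rw [hrpow]
      _ = (J z * (1 - ‖z‖ ^ 2) ^ 2) * (D ^ 2 * (1 - ‖moebius a z‖ ^ 2) ^ (p - 2)) := by
          rw [ht]; ring
      _ ≤ B ^ 2 * (D ^ 2 * (1 - ‖moebius a z‖ ^ 2) ^ (p - 2)) :=
          mul_le_mul_of_nonneg_right hsq (by positivity)
  calc ∫⁻ z in unitDisk, ENNReal.ofReal (J z * (1 - ‖moebius a z‖ ^ 2) ^ p)
      ≤ ∫⁻ z in unitDisk, ENNReal.ofReal (B ^ 2) * (ENNReal.ofReal |(f' z).det|
          * ENNReal.ofReal ((1 - ‖moebius a z‖ ^ 2) ^ (p - 2))) :=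
        setLIntegral_mono' hmeasD key
    _ = ENNReal.ofReal (B ^ 2) * ∫⁻ z in unitDisk, ENNReal.ofReal |(f' z).det|
          * ENNReal.ofReal ((1 - ‖moebius a z‖ ^ 2) ^ (p - 2)) :=
        lintegral_const_mul' _ _ ENNReal.ofReal_ne_top
    _ = ENNReal.ofReal (B ^ 2) * ∫⁻ ζ in unitDisk, ENNReal.ofReal ((1 - ‖ζ‖ ^ 2) ^ (p - 2)) := by
        rw [← hcov]




lemma meas_aux (q : ℝ) :
    Measurable (fun r : ℝ => ENNReal.ofReal |r| * ENNReal.ofReal ((1 - r ^ 2) ^ q)) := by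
  apply Measurable.fun_mul
  · exact measurable_id.abs.ennreal_ofReal
  · apply Measurable.ennreal_ofReal
    measurability

lemma finite_weight (p : ℝ) (hp : 1 < p) :
    (∫⁻ ζ in unitDisk, ENNReal.ofReal ((1 - ‖ζ‖ ^ 2) ^ (p - 2))) < ⊤ := by
  set q := p - 2 with hqdef
  have hq : (-1 : ℝ) < q := by rw [hqdef]; linarith
  -- 1D integral J is finite
  have hJ : (∫⁻ u in Ioo (0:ℝ) 1, ENNReal.ofReal (u ^ q)) < ⊤ := by
    have hii := intervalIntegral.intervalIntegrable_rpow' (a := 0) (b := 1) hq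
    rw [intervalIntegrable_iff, Set.uIoc_of_le zero_le_one] at hii
    exact (hii.mono_set Ioo_subset_Ioc_self).lintegral_lt_top
  -- radial integral I is finite
  have hI : (∫⁻ r in Ioo (0:ℝ) 1, ENNReal.ofReal |r| * ENNReal.ofReal ((1 - r ^ 2) ^ q)) < ⊤ := by
    have hder : ∀ r ∈ Ioo (0:ℝ) 1,
        HasFDerivWithinAt (fun r : ℝ => 1 - r ^ 2)
          ((1 : ℝ →L[ℝ] ℝ).smulRight (-(2 * r))) (Ioo (0:ℝ) 1) r := by
      intro r _
      have h : HasDerivAt (fun r : ℝ => 1 - r ^ 2) (-(2 * r)) r := by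
        simpa using (hasDerivAt_pow 2 r).const_sub 1
      exact h.hasFDerivAt.hasFDerivWithinAt
    have hinj : Set.InjOn (fun r : ℝ => 1 - r ^ 2) (Ioo (0:ℝ) 1) := by
      intro x hx y hy hxy
      simp only at hxy
      apply le_antisymm <;> nlinarith [hx.1, hy.1]
    have hcov := lintegral_image_eq_lintegral_abs_det_fderiv_mul volume measurableSet_Ioo
      hder hinj (fun u => ENNReal.ofReal (u ^ q))
    have himg : (fun r : ℝ => 1 - r ^ 2) '' Ioo (0:ℝ) 1 ⊆ Ioo (0:ℝ) 1 := by
      rintro u ⟨r, hr, rfl⟩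
      refine ⟨?_, ?_⟩ <;> show _ < _ <;> simp only <;> nlinarith [hr.1, hr.2]
    calc (∫⁻ r in Ioo (0:ℝ) 1, ENNReal.ofReal |r| * ENNReal.ofReal ((1 - r ^ 2) ^ q))
        ≤ ∫⁻ r in Ioo (0:ℝ) 1,
            ENNReal.ofReal |((1 : ℝ →L[ℝ] ℝ).smulRight (-(2 * r))).det|
              * ENNReal.ofReal ((1 - r ^ 2) ^ q) := by
          apply setLIntegral_mono' measurableSet_Ioo
          intro r hr
          rw [ContinuousLinearMap.smulRight_one_eq_toSpanSingleton, ContinuousLinearMap.det_toSpanSingleton]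
          have h1 : |r| ≤ |(-(2 * r))| := by
            have h2 : |(2:ℝ)| = 2 := by norm_num
            rw [abs_neg, abs_mul, h2]
            nlinarith [abs_nonneg r]
          exact mul_le_mul_left (ENNReal.ofReal_le_ofReal h1) _
      _ = ∫⁻ u in (fun r : ℝ => 1 - r ^ 2) '' Ioo (0:ℝ) 1, ENNReal.ofReal (u ^ q) := hcov.symm
      _ ≤ ∫⁻ u in Ioo (0:ℝ) 1, ENNReal.ofReal (u ^ q) := lintegral_mono_set himg
      _ < ⊤ := hJ
  -- transfer to ℝ × ℝ
  have hnorm : ∀ ζ : ℂ, ‖ζ‖ ^ 2 = ζ.re ^ 2 + ζ.im ^ 2 := by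
    intro ζ
    rw [Complex.sq_norm, Complex.normSq_apply]
    ring
  have step1 : (∫⁻ ζ in unitDisk, ENNReal.ofReal ((1 - ‖ζ‖ ^ 2) ^ q))
      = ∫⁻ pp in Complex.measurableEquivRealProd '' unitDisk,
          ENNReal.ofReal ((1 - (pp.1 ^ 2 + pp.2 ^ 2)) ^ q) := by
    rw [← Complex.volume_preserving_equiv_real_prod.setLIntegral_comp_emb
      Complex.measurableEquivRealProd.measurableEmbedding
      (fun pp => ENNReal.ofReal ((1 - (pp.1 ^ 2 + pp.2 ^ 2)) ^ q)) unitDisk]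
    apply lintegral_congr
    intro ζ
    simp only [Complex.measurableEquivRealProd_apply]
    rw [hnorm ζ]
  set S := Complex.measurableEquivRealProd '' unitDisk with hSdef
  set recT : Set (ℝ × ℝ) := Ioo (0:ℝ) 1 ×ˢ Ioo (-π) π with hrecT
  have hsub : S ⊆ polarCoord.symm '' recT ∪ {pp : ℝ × ℝ | pp.2 = 0} := by
    rintro pp hpp
    have hlt : pp.1 ^ 2 + pp.2 ^ 2 < 1 := by
      obtain ⟨ζ, hζ, rfl⟩ := hpp
      have h1 : ‖ζ‖ < 1 := mem_ball_zero_iff.1 hζ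
      simp only [Complex.measurableEquivRealProd_apply]
      rw [← hnorm ζ]
      nlinarith [norm_nonneg ζ]
    by_cases h0 : pp.2 = 0
    · exact Or.inr h0
    · left
      have hsrc : pp ∈ polarCoord.source := by
        rw [polarCoord_source]; exact Or.inr h0
      refine ⟨polarCoord pp, ?_, polarCoord.left_inv hsrc⟩
      have htgt := polarCoord.map_source hsrc
      rw [polarCoord_target] at htgt
      refine ⟨⟨htgt.1, ?_⟩, htgt.2⟩
      show √(pp.1 ^ 2 + pp.2 ^ 2) < 1
      rw [show (1:ℝ) = √1 from (Real.sqrt_one).symm]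
      exact Real.sqrt_lt_sqrt (by positivity) (by simpa using hlt)
  have hline : volume {pp : ℝ × ℝ | pp.2 = 0} = 0 := by
    have : {pp : ℝ × ℝ | pp.2 = 0} = (univ : Set ℝ) ×ˢ ({0} : Set ℝ) := by
      ext ⟨x, y⟩
      simp [Set.mem_prod, eq_comm]
    rw [this, Measure.volume_eq_prod, Measure.prod_prod]
    simp
  -- change of variables via polar coordinates
  set Bmap : ℝ × ℝ → ℝ × ℝ →L[ℝ] ℝ × ℝ := fun pp =>
    LinearMap.toContinuousLinearMap (Matrix.toLin (Module.Basis.finTwoProd ℝ) (Module.Basis.finTwoProd ℝ)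
      !![Real.cos pp.2, -pp.1 * Real.sin pp.2; Real.sin pp.2, pp.1 * Real.cos pp.2]) with hBmap
  have hBdet : ∀ pp : ℝ × ℝ, (Bmap pp).det = pp.1 := by
    intro pp
    conv_rhs => rw [← one_mul pp.1, ← Real.cos_sq_add_sin_sq pp.2]
    simp only [hBmap, neg_mul, LinearMap.det_toContinuousLinearMap, LinearMap.det_toLin,
      Matrix.det_fin_two_of, sub_neg_eq_add]
    ring
  have hBder : ∀ pp ∈ recT, HasFDerivWithinAt polarCoord.symm (Bmap pp) recT pp := fun pp _ =>
    (hasFDerivAt_polarCoord_symm pp).hasFDerivWithinAt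
  have hmeasT : MeasurableSet recT := measurableSet_Ioo.prod measurableSet_Ioo
  have hinjT : Set.InjOn polarCoord.symm recT := by
    apply polarCoord.symm.injOn.mono
    rw [OpenPartialHomeomorph.symm_source, polarCoord_target, hrecT]
    exact Set.prod_mono Ioo_subset_Ioi_self subset_rfl
  have hcovT := lintegral_image_eq_lintegral_abs_det_fderiv_mul volume hmeasT hBder hinjT
    (fun pp => ENNReal.ofReal ((1 - (pp.1 ^ 2 + pp.2 ^ 2)) ^ q))
  have hrw : (∫⁻ pp in recT,
        ENNReal.ofReal |(Bmap pp).det|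
          * ENNReal.ofReal ((1 - ((polarCoord.symm pp).1 ^ 2 + (polarCoord.symm pp).2 ^ 2)) ^ q))
      = ∫⁻ pp in recT,
          (fun r : ℝ => ENNReal.ofReal |r| * ENNReal.ofReal ((1 - r ^ 2) ^ q)) pp.1
            * (fun _ : ℝ => (1 : ℝ≥0∞)) pp.2 := by
    apply setLIntegral_congr_fun hmeasT
    intro pp hpp
    have h1 : (polarCoord.symm pp).1 ^ 2 + (polarCoord.symm pp).2 ^ 2 = pp.1 ^ 2 := by
      simp only [polarCoord_symm_apply]
      rw [mul_pow, mul_pow, ← mul_add, Real.cos_sq_add_sin_sq, mul_one]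
    beta_reduce
    rw [hBdet, h1, mul_one]
  have hprod : (∫⁻ pp in recT,
        (fun r : ℝ => ENNReal.ofReal |r| * ENNReal.ofReal ((1 - r ^ 2) ^ q)) pp.1
          * (fun _ : ℝ => (1 : ℝ≥0∞)) pp.2)
      = (∫⁻ r in Ioo (0:ℝ) 1, ENNReal.ofReal |r| * ENNReal.ofReal ((1 - r ^ 2) ^ q))
          * ∫⁻ θ in Ioo (-π) π, (1 : ℝ≥0∞) := by
    rw [hrecT, Measure.volume_eq_prod, ← Measure.prod_restrict]
    have hm1 : AEMeasurable (fun r : ℝ => ENNReal.ofReal |r| * ENNReal.ofReal ((1 - r ^ 2) ^ q))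
        (volume.restrict (Ioo (0:ℝ) 1)) := (meas_aux q).aemeasurable
    exact lintegral_prod_mul hm1 aemeasurable_const
  calc (∫⁻ ζ in unitDisk, ENNReal.ofReal ((1 - ‖ζ‖ ^ 2) ^ q))
      = ∫⁻ pp in S, ENNReal.ofReal ((1 - (pp.1 ^ 2 + pp.2 ^ 2)) ^ q) := step1
    _ ≤ ∫⁻ pp in polarCoord.symm '' recT ∪ {pp : ℝ × ℝ | pp.2 = 0},
          ENNReal.ofReal ((1 - (pp.1 ^ 2 + pp.2 ^ 2)) ^ q) := lintegral_mono_set hsub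
    _ ≤ (∫⁻ pp in polarCoord.symm '' recT, ENNReal.ofReal ((1 - (pp.1 ^ 2 + pp.2 ^ 2)) ^ q))
          + ∫⁻ pp in {pp : ℝ × ℝ | pp.2 = 0},
              ENNReal.ofReal ((1 - (pp.1 ^ 2 + pp.2 ^ 2)) ^ q) := lintegral_union_le _ _ _
    _ = ∫⁻ pp in polarCoord.symm '' recT, ENNReal.ofReal ((1 - (pp.1 ^ 2 + pp.2 ^ 2)) ^ q) := by
          rw [setLIntegral_measure_zero _ _ hline, add_zero]
    _ = (∫⁻ r in Ioo (0:ℝ) 1, ENNReal.ofReal |r| * ENNReal.ofReal ((1 - r ^ 2) ^ q))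
          * ∫⁻ θ in Ioo (-π) π, (1 : ℝ≥0∞) := by rw [hcovT, hrw, hprod]
    _ < ⊤ := by
        apply ENNReal.mul_lt_top hI
        rw [setLIntegral_one, Real.volume_Ioo]
        exact ENNReal.ofReal_lt_top

/-- If `F ∈ 𝔅𝒯`, i.e. `(1-|z|²)√|J_F(z)| ≤ β₂(F)` on `𝔻`, then for every
`a ∈ 𝔻`, `∫_𝔻 |J_F|(1-|φ_a|²)^p dA ≤ β₂(F)² ∫_𝔻 (1-|ζ|²)^{p-2} dA < ∞`; in particular
`𝔅𝒯 ⊆ 𝒬𝒯_p` for all `p > 1`. -/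
theorem blochType_subset_QpType
    (p : ℝ) (hp : 1 < p) (F : ℂ → ℂ) (hF : ContDiffOn ℝ 1 F unitDisk)
    (B : ℝ) (hB : ∀ z ∈ unitDisk, (1 - ‖z‖ ^ 2) * Real.sqrt |jac F z| ≤ B) :
    (∀ a ∈ unitDisk,
      ∫⁻ z in unitDisk, ENNReal.ofReal (|jac F z| * (1 - ‖moebius a z‖ ^ 2) ^ p)
        ≤ ENNReal.ofReal (B ^ 2)
            * ∫⁻ ζ in unitDisk, ENNReal.ofReal ((1 - ‖ζ‖ ^ 2) ^ (p - 2)))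
    ∧ (∫⁻ ζ in unitDisk, ENNReal.ofReal ((1 - ‖ζ‖ ^ 2) ^ (p - 2))) < ⊤ := by
  constructor
  · intro a ha
    exact part1 p (fun z => |jac F z|) (fun z => abs_nonneg _) B hB a (mem_ball_zero_iff.1 ha)
  · exact finite_weight p hp
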